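/- Let ν₀₁, ν₁₀ ≥ 0 and let (μ₁₀, μ₀₁) solve the ODE system μ₁₀' = (ν₀₁ − μ₀₁)(ν₁₀ − μ₁₀), μ₀₁' = (ν₀₁ − μ₀₁ + ν₁₀ − μ₁₀)(ν₀₁ − μ₀₁), with μ₁₀(0) = μ₀₁(0) = 0, on [0,∞). Then for all t ≥ 0, 0 ≤ μ₁₀(t) ≤ ν₁₀ and 0 ≤ μ₀₁(t) ≤ ν₀₁, and both μ₁₀ and μ₀₁ are nondecreasing. -/

import Mathlib

theorem stmt_1 (ν01 ν10 : ℝ) (hν01 : 0 ≤ ν01) (hν10 : 0 ≤ ν10)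
    (μ10 μ01 : ℝ → ℝ)
    (h10 : ∀ t ≥ (0:ℝ), HasDerivAt μ10 ((ν01 - μ01 t) * (ν10 - μ10 t)) t)
    (h01 : ∀ t ≥ (0:ℝ), HasDerivAt μ01 ((ν01 - μ01 t + (ν10 - μ10 t)) * (ν01 - μ01 t)) t)
    (h0 : μ10 0 = 0) (h0' : μ01 0 = 0) :
    (∀ t ≥ (0:ℝ), 0 ≤ μ10 t ∧ μ10 t ≤ ν10 ∧ 0 ≤ μ01 t ∧ μ01 t ≤ ν01) ∧
    MonotoneOn μ10 (Set.Ici 0) ∧ MonotoneOn μ01 (Set.Ici 0) := by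
  classical
  set a : ℝ → ℝ := fun t => ν10 - μ10 t with ha_def
  set b : ℝ → ℝ := fun t => ν01 - μ01 t with hb_def
  have ha' : ∀ t ≥ (0:ℝ), HasDerivAt a (-(b t * a t)) t := by
    intro t ht
    have := (h10 t ht).const_sub ν10
    convert this using 1
  have hb' : ∀ t ≥ (0:ℝ), HasDerivAt b (-((b t + a t) * b t)) t := by
    intro t ht
    have := (h01 t ht).const_sub ν01
    convert this using 1
  have hca : ∀ t ≥ (0:ℝ), ContinuousAt a t := fun t ht => (ha' t ht).continuousAt
  have hcb : ∀ t ≥ (0:ℝ), ContinuousAt b t := fun t ht => (hb' t ht).continuousAt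
  have hmax : Continuous fun t : ℝ => max t 0 := continuous_id.max continuous_const
  have hcam : Continuous fun t => a (max t 0) := by
    rw [continuous_iff_continuousAt]
    intro x
    have : ContinuousAt (a ∘ fun t : ℝ => max t 0) x :=
      ContinuousAt.comp (hca _ (le_max_right x 0)) hmax.continuousAt
    exact this
  have hcbm : Continuous fun t => b (max t 0) := by
    rw [continuous_iff_continuousAt]
    intro x
    have : ContinuousAt (b ∘ fun t : ℝ => max t 0) x :=
      ContinuousAt.comp (hcb _ (le_max_right x 0)) hmax.continuousAt
    exact this
  -- integrating factor for b
  set F : ℝ → ℝ := fun t => ∫ s in (0:ℝ)..t, (a (max s 0) + b (max s 0)) with hF_def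
  have hcF : Continuous fun s => a (max s 0) + b (max s 0) := hcam.add hcbm
  have hF : ∀ t : ℝ, HasDerivAt F (a (max t 0) + b (max t 0)) t := fun t =>
    intervalIntegral.integral_hasDerivAt_right (hcF.intervalIntegrable _ _)
      (hcF.stronglyMeasurableAtFilter _ _) hcF.continuousAt
  set G : ℝ → ℝ := fun t => b t * Real.exp (F t) with hG_def
  have hG : ∀ t ≥ (0:ℝ), HasDerivAt G 0 t := by
    intro t ht
    have h2 : HasDerivAt (fun y => b y * Real.exp (F y)) _ t := ((hb' t ht).mul (hF t).exp)
    rw [max_eq_left ht] at h2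
    convert h2 using 1
    ring
  have hG0 : G 0 = ν01 := by
    simp [hG_def, hF_def, hb_def, intervalIntegral.integral_same, h0']
  have hbnn : ∀ t ≥ (0:ℝ), 0 ≤ b t := by
    intro t ht
    have hconst : G t = G 0 := by
      have := constant_of_has_deriv_right_zero (a := 0) (b := t) (f := G)
        (fun x hx => ((hG x hx.1).continuousAt).continuousWithinAt)
        (fun x hx => (hG x hx.1).hasDerivWithinAt)
      exact this t ⟨ht, le_refl t⟩
    rw [hG0] at hconst
    have hc2 : b t * Real.exp (F t) = ν01 := hconst
    have he := Real.exp_pos (F t)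
    nlinarith [hc2]
  -- integrating factor for a
  set F2 : ℝ → ℝ := fun t => ∫ s in (0:ℝ)..t, b (max s 0) with hF2_def
  have hF2 : ∀ t : ℝ, HasDerivAt F2 (b (max t 0)) t := fun t =>
    intervalIntegral.integral_hasDerivAt_right (hcbm.intervalIntegrable _ _)
      (hcbm.stronglyMeasurableAtFilter _ _) hcbm.continuousAt
  set G2 : ℝ → ℝ := fun t => a t * Real.exp (F2 t) with hG2_def
  have hG2 : ∀ t ≥ (0:ℝ), HasDerivAt G2 0 t := by
    intro t ht
    have h2 : HasDerivAt (fun y => a y * Real.exp (F2 y)) _ t := ((ha' t ht).mul (hF2 t).exp)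
    rw [max_eq_left ht] at h2
    convert h2 using 1
    ring
  have hG20 : G2 0 = ν10 := by
    simp [hG2_def, hF2_def, ha_def, intervalIntegral.integral_same, h0]
  have hann : ∀ t ≥ (0:ℝ), 0 ≤ a t := by
    intro t ht
    have hconst : G2 t = G2 0 := by
      have := constant_of_has_deriv_right_zero (a := 0) (b := t) (f := G2)
        (fun x hx => ((hG2 x hx.1).continuousAt).continuousWithinAt)
        (fun x hx => (hG2 x hx.1).hasDerivWithinAt)
      exact this t ⟨ht, le_refl t⟩
    rw [hG20] at hconst
    have hc2 : a t * Real.exp (F2 t) = ν10 := hconst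
    have he := Real.exp_pos (F2 t)
    nlinarith [hc2]
  -- monotonicity
  have hmono10 : MonotoneOn μ10 (Set.Ici 0) := by
    apply monotoneOn_of_deriv_nonneg (convex_Ici 0)
    · exact fun x hx => ((h10 x hx).continuousAt).continuousWithinAt
    · intro x hx
      rw [interior_Ici] at hx
      exact ((h10 x (le_of_lt hx)).differentiableAt).differentiableWithinAt
    · intro x hx
      rw [interior_Ici] at hx
      rw [(h10 x (le_of_lt hx)).deriv]
      exact mul_nonneg (hbnn x (le_of_lt hx)) (hann x (le_of_lt hx))
  have hmono01 : MonotoneOn μ01 (Set.Ici 0) := by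
    apply monotoneOn_of_deriv_nonneg (convex_Ici 0)
    · exact fun x hx => ((h01 x hx).continuousAt).continuousWithinAt
    · intro x hx
      rw [interior_Ici] at hx
      exact ((h01 x (le_of_lt hx)).differentiableAt).differentiableWithinAt
    · intro x hx
      rw [interior_Ici] at hx
      rw [(h01 x (le_of_lt hx)).deriv]
      exact mul_nonneg (add_nonneg (hbnn x (le_of_lt hx)) (hann x (le_of_lt hx)))
        (hbnn x (le_of_lt hx))
  refine ⟨fun t ht => ?_, hmono10, hmono01⟩
  have h1 : 0 ≤ μ10 t := h0 ▸ hmono10 (Set.self_mem_Ici) ht ht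
  have h2 : 0 ≤ μ01 t := h0' ▸ hmono01 (Set.self_mem_Ici) ht ht
  have h3 := hann t ht
  have h4 := hbnn t ht
  simp only [ha_def, hb_def] at h3 h4
  exact ⟨h1, by linarith, h2, by linarith⟩
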